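/- For all integers m ≥ 1 and t ≥ 0, the average path length of the Koch network K_{m,t}, i.e. the average of the graph distance d(u,v) over all unordered pairs of distinct vertices u, v, equals [3m+5+(24mt+24m+4)(3m+1)^t] / {3(3m+1)[2(3m+1)^t+1]}. -/

import Mathlib

/-- The triangles of the Koch network `K_{m,t}`: at step `t+1`, each old triangle survives and
each (triangle, corner, group) creates a new triangle. -/
def KochTri (m : ℕ) : ℕ → Type
  | 0 => Unit
  | t+1 => KochTri m t ⊕ (KochTri m t × Fin 3 × Fin m)

/-- The vertices of the Koch network `K_{m,t}`: at step `t+1`, each (triangle, corner, group)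
creates two new vertices. -/
def KochVertex (m : ℕ) : ℕ → Type
  | 0 => Fin 3
  | t+1 => KochVertex m t ⊕ (KochTri m t × Fin 3 × Fin m × Fin 2)

/-- The three corner vertices of each triangle. -/
def KochCorner (m : ℕ) : ∀ t, KochTri m t → Fin 3 → KochVertex m t
  | 0, _, i => i
  | t+1, Sum.inl τ, i => Sum.inl (KochCorner m t τ i)
  | t+1, Sum.inr (τ, c, g), i =>
      ![Sum.inl (KochCorner m t τ c), Sum.inr (τ, c, g, 0), Sum.inr (τ, c, g, 1)] i

instance KochTri.instDecidableEq (m : ℕ) : ∀ t, DecidableEq (KochTri m t)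
  | 0 => inferInstanceAs (DecidableEq Unit)
  | t+1 =>
    letI := KochTri.instDecidableEq m t
    inferInstanceAs (DecidableEq (KochTri m t ⊕ (KochTri m t × Fin 3 × Fin m)))

instance KochVertex.instDecidableEq (m : ℕ) : ∀ t, DecidableEq (KochVertex m t)
  | 0 => inferInstanceAs (DecidableEq (Fin 3))
  | t+1 =>
    letI := KochVertex.instDecidableEq m t
    letI := KochTri.instDecidableEq m t
    inferInstanceAs (DecidableEq (KochVertex m t ⊕ (KochTri m t × Fin 3 × Fin m × Fin 2)))

instance KochTri.instFintype (m : ℕ) : ∀ t, Fintype (KochTri m t)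
  | 0 => inferInstanceAs (Fintype Unit)
  | t+1 =>
    letI := KochTri.instFintype m t
    inferInstanceAs (Fintype (KochTri m t ⊕ (KochTri m t × Fin 3 × Fin m)))

instance KochVertex.instFintype (m : ℕ) : ∀ t, Fintype (KochVertex m t)
  | 0 => inferInstanceAs (Fintype (Fin 3))
  | t+1 =>
    letI := KochVertex.instFintype m t
    letI := KochTri.instFintype m t
    inferInstanceAs (Fintype (KochVertex m t ⊕ (KochTri m t × Fin 3 × Fin m × Fin 2)))

/-- The Koch network `K_{m,t}`: two distinct vertices are adjacent iff they are corners of a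
common triangle. -/
def KochGraph (m t : ℕ) : SimpleGraph (KochVertex m t) where
  Adj u v := u ≠ v ∧ ∃ (τ : KochTri m t) (i j : Fin 3),
      KochCorner m t τ i = u ∧ KochCorner m t τ j = v
  symm := ⟨by rintro u v ⟨hne, τ, i, j, hi, hj⟩; exact ⟨hne.symm, τ, j, i, hj, hi⟩⟩
  loopless := ⟨by rintro u ⟨hne, -⟩; exact hne rfl⟩

instance (m t : ℕ) : DecidableRel (KochGraph m t).Adj := fun u v =>
  inferInstanceAs (Decidable (u ≠ v ∧ ∃ (τ : KochTri m t) (i j : Fin 3),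
      KochCorner m t τ i = u ∧ KochCorner m t τ j = v))

/-- The step at which a vertex of `K_{m,t}` was added (initial vertices are added at step 0). -/
def KochBirth (m : ℕ) : ∀ t, KochVertex m t → ℕ
  | 0, _ => 0
  | t+1, Sum.inl v => KochBirth m t v
  | t+1, Sum.inr _ => t+1

/-- The canonical inclusion of `K_{m,t}` into `K_{m,t+1}`. -/
def KochInl (m t : ℕ) (v : KochVertex m t) : KochVertex m (t+1) := Sum.inl v

/-- The other member of the group of two with which a (non-initial) vertex was added. -/
def KochSibling (m : ℕ) : ∀ t, KochVertex m t → KochVertex m t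
  | 0, v => v
  | t+1, Sum.inl v => Sum.inl (KochSibling m t v)
  | t+1, Sum.inr (τ, c, g, p) => Sum.inr (τ, c, g, if p = 0 then 1 else 0)

/-- The father vertex of a (non-initial) vertex: the existing vertex to which its group of two
was attached. -/
def KochFather (m : ℕ) : ∀ t, KochVertex m t → KochVertex m t
  | 0, v => v
  | t+1, Sum.inl v => Sum.inl (KochFather m t v)
  | t+1, Sum.inr (τ, c, _, _) => Sum.inl (KochCorner m t τ c)
attribute [reducible] KochVertex KochTri
open SimpleGraph

lemma koch_adj_iff {m t : ℕ} {u v : KochVertex m t} : (KochGraph m t).Adj u v ↔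
    u ≠ v ∧ ∃ (τ : KochTri m t) (i j : Fin 3),
      KochCorner m t τ i = u ∧ KochCorner m t τ j = v := Iff.rfl

lemma koch_corner_inl (m t : ℕ) (τ : KochTri m t) (i : Fin 3) :
    KochCorner m (t+1) (Sum.inl τ) i = Sum.inl (KochCorner m t τ i) := rfl

@[simp] lemma koch_inl_inj {m t : ℕ} {u v : KochVertex m t} :
    @Eq (KochVertex m (t+1)) (Sum.inl u) (Sum.inl v) ↔ u = v := Sum.inl_injective.eq_iff

@[simp] lemma koch_inr_inj {m t : ℕ} {q q' : KochTri m t × Fin 3 × Fin m × Fin 2} :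
    @Eq (KochVertex m (t+1)) (Sum.inr q) (Sum.inr q') ↔ q = q' := Sum.inr_injective.eq_iff

@[simp] lemma koch_inl_eq_inr {m t : ℕ} {u : KochVertex m t}
    {q : KochTri m t × Fin 3 × Fin m × Fin 2} :
    @Eq (KochVertex m (t+1)) (Sum.inl u) (Sum.inr q) ↔ False :=
  ⟨fun h => Sum.inl_ne_inr h, False.elim⟩

@[simp] lemma koch_inr_eq_inl {m t : ℕ} {u : KochVertex m t}
    {q : KochTri m t × Fin 3 × Fin m × Fin 2} :
    @Eq (KochVertex m (t+1)) (Sum.inr q) (Sum.inl u) ↔ False :=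
  ⟨fun h => Sum.inr_ne_inl h, False.elim⟩

lemma koch_adj_inl_inl {m t : ℕ} {u v : KochVertex m t} :
    (KochGraph m (t+1)).Adj (Sum.inl u) (Sum.inl v) ↔ (KochGraph m t).Adj u v := by
  constructor
  · rintro ⟨hne, σ | ⟨τ, c, g⟩, i, j, hi, hj⟩
    · rw [koch_corner_inl] at hi hj
      exact ⟨fun h => hne (by rw [h]), σ, i, j, Sum.inl.inj hi, Sum.inl.inj hj⟩
    · fin_cases i <;> fin_cases j <;>
        simp_all [KochCorner, Matrix.cons_val_zero, Matrix.cons_val_one]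
  · rintro ⟨hne, τ, i, j, hi, hj⟩
    exact ⟨fun h => hne (Sum.inl.inj h), Sum.inl τ, i, j,
      by rw [koch_corner_inl, hi], by rw [koch_corner_inl, hj]⟩

lemma koch_adj_inl_inr {m t : ℕ} {u : KochVertex m t} {τ : KochTri m t} {c : Fin 3} {g : Fin m}
    {p : Fin 2} :
    (KochGraph m (t+1)).Adj (Sum.inl u) (Sum.inr (τ, c, g, p)) ↔ u = KochCorner m t τ c := by
  constructor
  · rintro ⟨hne, σ | ⟨τ', c', g'⟩, i, j, hi, hj⟩
    · rw [koch_corner_inl] at hj; exact absurd hj (by simp)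
    · fin_cases i <;> fin_cases j <;>
        simp_all [KochCorner, Matrix.cons_val_zero, Matrix.cons_val_one, Prod.ext_iff]
  · rintro rfl
    refine ⟨by simp, Sum.inr (τ, c, g), 0, if p = 0 then 1 else 2, rfl, ?_⟩
    fin_cases p <;> simp [KochCorner]

lemma koch_adj_inr_inr {m t : ℕ} {τ τ' : KochTri m t} {c c' : Fin 3} {g g' : Fin m}
    {p p' : Fin 2} :
    (KochGraph m (t+1)).Adj (Sum.inr (τ, c, g, p)) (Sum.inr (τ', c', g', p')) ↔
      τ = τ' ∧ c = c' ∧ g = g' ∧ p ≠ p' := by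
  constructor
  · rintro ⟨hne, σ | ⟨τ'', c'', g''⟩, i, j, hi, hj⟩
    · rw [koch_corner_inl] at hi; exact absurd hi (by simp)
    · fin_cases i <;> fin_cases j <;>
        simp_all [KochCorner, Matrix.cons_val_zero, Matrix.cons_val_one, Prod.ext_iff] <;>
        (obtain ⟨-, -, -, rfl⟩ := hi; simp_all)
  · rintro ⟨rfl, rfl, rfl, hp⟩
    refine ⟨by simp [Prod.ext_iff, hp], Sum.inr (τ, c, g),
      if p = 0 then 1 else 2, if p' = 0 then 1 else 2, ?_, ?_⟩ <;>
      fin_cases p <;> fin_cases p' <;> simp_all [KochCorner]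

def kochHom (m t : ℕ) : KochGraph m t →g KochGraph m (t+1) :=
  ⟨Sum.inl, fun h => koch_adj_inl_inl.mpr h⟩

/-- Projection of level `t+1` vertices to level `t`. -/
def kochProj (m t : ℕ) : KochVertex m (t+1) → KochVertex m t
  | Sum.inl u => u
  | Sum.inr (τ, c, _, _) => KochCorner m t τ c

lemma koch_connected (m : ℕ) : ∀ t, (KochGraph m t).Connected := by
  intro t
  induction t with
  | zero =>
    rw [SimpleGraph.connected_iff]
    refine ⟨fun u v => ?_, ⟨(0 : Fin 3)⟩⟩
    by_cases h : u = v
    · exact h ▸ SimpleGraph.Reachable.refl u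
    · exact (SimpleGraph.Adj.reachable ⟨h, (), u, v, rfl, rfl⟩)
  | succ t ih =>
    rw [SimpleGraph.connected_iff]
    refine ⟨fun a b => ?_, ⟨Sum.inl ih.nonempty.some⟩⟩
    · have key : ∀ a : KochVertex m (t+1), ∃ u : KochVertex m t,
          (KochGraph m (t+1)).Reachable a (Sum.inl u) := by
        rintro (u | ⟨τ, c, g, p⟩)
        · exact ⟨u, SimpleGraph.Reachable.refl _⟩
        · exact ⟨KochCorner m t τ c,
            SimpleGraph.Adj.reachable ((koch_adj_inl_inr.mpr rfl).symm)⟩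
      obtain ⟨u, hu⟩ := key a
      obtain ⟨v, hv⟩ := key b
      exact hu.trans ((SimpleGraph.Reachable.map (kochHom m t) (ih u v)).trans hv.symm)

lemma koch_proj_le {m t : ℕ} {a b : KochVertex m (t+1)} (w : (KochGraph m (t+1)).Walk a b) :
    (KochGraph m t).dist (kochProj m t a) (kochProj m t b) ≤ w.length := by
  induction w with
  | nil => simp
  | @cons a a' b h q ih =>
    have step : kochProj m t a = kochProj m t a' ∨
        (KochGraph m t).Adj (kochProj m t a) (kochProj m t a') := by
      obtain u | ⟨τ, c, g, p⟩ := a <;> obtain u' | ⟨τ', c', g', p'⟩ := a'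
      · exact Or.inr (koch_adj_inl_inl.mp h)
      · exact Or.inl (koch_adj_inl_inr.mp h)
      · exact Or.inl (koch_adj_inl_inr.mp h.symm).symm
      · obtain ⟨rfl, rfl, rfl, -⟩ := koch_adj_inr_inr.mp h
        exact Or.inl rfl
    rw [SimpleGraph.Walk.length_cons]
    rcases step with heq | hadj
    · rw [heq]; omega
    · calc (KochGraph m t).dist (kochProj m t a) (kochProj m t b)
          ≤ (KochGraph m t).dist (kochProj m t a) (kochProj m t a')
            + (KochGraph m t).dist (kochProj m t a') (kochProj m t b) :=
            (koch_connected m t).dist_triangle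
        _ ≤ 1 + q.length := by
            have h1 : (KochGraph m t).dist (kochProj m t a) (kochProj m t a') = 1 :=
              SimpleGraph.dist_eq_one_iff_adj.mpr hadj
            omega
        _ = q.length + 1 := by omega

lemma koch_dist_inl_inl {m t : ℕ} (u v : KochVertex m t) :
    (KochGraph m (t+1)).dist (Sum.inl u) (Sum.inl v) = (KochGraph m t).dist u v := by
  apply le_antisymm
  · obtain ⟨p, hp⟩ := ((koch_connected m t) u v).exists_walk_length_eq_dist
    calc (KochGraph m (t+1)).dist (Sum.inl u) (Sum.inl v)
        ≤ (p.map (kochHom m t)).length := SimpleGraph.dist_le _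
      _ = (KochGraph m t).dist u v := by rw [SimpleGraph.Walk.length_map, hp]
  · obtain ⟨q, hq⟩ := ((koch_connected m (t+1)) (Sum.inl u) (Sum.inl v)).exists_walk_length_eq_dist
    have := koch_proj_le (t := t) q
    rw [hq] at this
    exact this

lemma koch_adj_inr_cases {m t : ℕ} {τ : KochTri m t} {c : Fin 3} {g : Fin m} {p : Fin 2}
    {b : KochVertex m (t+1)} (h : (KochGraph m (t+1)).Adj (Sum.inr (τ, c, g, p)) b) :
    b = Sum.inl (KochCorner m t τ c) ∨ ∃ p' : Fin 2, b = Sum.inr (τ, c, g, p') := by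
  obtain u | ⟨τ', c', g', p'⟩ := b
  · left; rw [koch_adj_inl_inr.mp h.symm]
  · obtain ⟨rfl, rfl, rfl, -⟩ := koch_adj_inr_inr.mp h
    exact Or.inr ⟨p', rfl⟩

lemma koch_walk_new {m t : ℕ} (τ : KochTri m t) (c : Fin 3) (g : Fin m) :
    ∀ (n : ℕ) (p : Fin 2) (b : KochVertex m (t+1))
      (w : (KochGraph m (t+1)).Walk (Sum.inr (τ, c, g, p)) b), w.length = n →
      (∀ p' : Fin 2, b ≠ Sum.inr (τ, c, g, p')) →
      1 + (KochGraph m (t+1)).dist (Sum.inl (KochCorner m t τ c)) b ≤ n := by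
  intro n
  induction n using Nat.strong_induction_on with
  | _ n IH =>
    intro p b w hlen hb
    cases w with
    | nil => exact absurd rfl (hb p)
    | @cons _ a' _ h q =>
      rcases koch_adj_inr_cases h with rfl | ⟨p'', rfl⟩
      · have := SimpleGraph.dist_le q
        simp only [SimpleGraph.Walk.length_cons] at hlen
        omega
      · simp only [SimpleGraph.Walk.length_cons] at hlen
        have := IH q.length (by omega) p'' b q rfl hb
        omega

lemma koch_dist_inr {m t : ℕ} (τ : KochTri m t) (c : Fin 3) (g : Fin m) (p : Fin 2)
    (b : KochVertex m (t+1)) (hb : ∀ p' : Fin 2, b ≠ Sum.inr (τ, c, g, p')) :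
    (KochGraph m (t+1)).dist (Sum.inr (τ, c, g, p)) b =
      1 + (KochGraph m (t+1)).dist (Sum.inl (KochCorner m t τ c)) b := by
  apply le_antisymm
  · obtain ⟨q, hq⟩ :=
      ((koch_connected m (t+1)) (Sum.inl (KochCorner m t τ c)) b).exists_walk_length_eq_dist
    have hadj : (KochGraph m (t+1)).Adj (Sum.inr (τ, c, g, p)) (Sum.inl (KochCorner m t τ c)) :=
      (koch_adj_inl_inr.mpr rfl).symm
    have := SimpleGraph.dist_le (SimpleGraph.Walk.cons hadj q)
    rw [SimpleGraph.Walk.length_cons, hq] at this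
    omega
  · obtain ⟨w, hw⟩ :=
      ((koch_connected m (t+1)) (Sum.inr (τ, c, g, p)) b).exists_walk_length_eq_dist
    exact koch_walk_new τ c g _ p b w hw hb

lemma koch_dist_inl_inr {m t : ℕ} (u : KochVertex m t) (τ : KochTri m t) (c : Fin 3) (g : Fin m)
    (p : Fin 2) :
    (KochGraph m (t+1)).dist (Sum.inl u) (Sum.inr (τ, c, g, p)) =
      (KochGraph m t).dist u (KochCorner m t τ c) + 1 := by
  rw [SimpleGraph.dist_comm, koch_dist_inr τ c g p _ (by intro p'; simp),
    SimpleGraph.dist_comm, koch_dist_inl_inl]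
  omega

lemma koch_dist_inr_inr_same {m t : ℕ} (τ : KochTri m t) (c : Fin 3) (g : Fin m) (p p' : Fin 2) :
    (KochGraph m (t+1)).dist (Sum.inr (τ, c, g, p)) (Sum.inr (τ, c, g, p')) =
      if p = p' then 0 else 1 := by
  split
  · next h => rw [h, SimpleGraph.dist_self]
  · next h => exact SimpleGraph.dist_eq_one_iff_adj.mpr (koch_adj_inr_inr.mpr ⟨rfl, rfl, rfl, h⟩)

lemma koch_dist_inr_inr {m t : ℕ} (τ τ' : KochTri m t) (c c' : Fin 3) (g g' : Fin m)
    (p p' : Fin 2) (hgr : ¬(τ = τ' ∧ c = c' ∧ g = g')) :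
    (KochGraph m (t+1)).dist (Sum.inr (τ, c, g, p)) (Sum.inr (τ', c', g', p')) =
      (KochGraph m t).dist (KochCorner m t τ c) (KochCorner m t τ' c') + 2 := by
  rw [koch_dist_inr τ c g p _ (by
      intro q'
      simp only [koch_inr_inj, ne_eq, Prod.mk.injEq]
      rintro ⟨rfl, rfl, rfl, -⟩
      exact hgr ⟨rfl, rfl, rfl⟩),
    koch_dist_inl_inr]
  omega

lemma koch_card_tri (m : ℕ) : ∀ t, Fintype.card (KochTri m t) = (3*m+1)^t := by
  intro t
  induction t with
  | zero => rfl
  | succ t ih =>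
    have : Fintype.card (KochTri m (t+1))
        = Fintype.card (KochTri m t ⊕ (KochTri m t × Fin 3 × Fin m)) := rfl
    erw [this, Fintype.card_sum, Fintype.card_prod, Fintype.card_prod, ih]
    simp [Fintype.card_fin]
    ring

lemma koch_card_vertex (m : ℕ) : ∀ t, Fintype.card (KochVertex m t) = 2*(3*m+1)^t + 1 := by
  intro t
  induction t with
  | zero => rfl
  | succ t ih =>
    have : Fintype.card (KochVertex m (t+1))
        = Fintype.card (KochVertex m t ⊕ (KochTri m t × Fin 3 × Fin m × Fin 2)) := rfl
    erw [this, Fintype.card_sum, Fintype.card_prod, Fintype.card_prod, Fintype.card_prod, ih,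
      koch_card_tri]
    simp [Fintype.card_fin]
    ring

lemma koch_sum_vertex {m t : ℕ} {M : Type*} [AddCommMonoid M] (f : KochVertex m (t+1) → M) :
    ∑ a : KochVertex m (t+1), f a
      = ∑ u : KochVertex m t, f (Sum.inl u)
        + ∑ τ : KochTri m t, ∑ c : Fin 3, ∑ g : Fin m, ∑ p : Fin 2, f (Sum.inr (τ, c, g, p)) := by
  rw [show (∑ a : KochVertex m (t+1), f a)
      = ∑ a : KochVertex m t ⊕ (KochTri m t × Fin 3 × Fin m × Fin 2), f a from rfl,
    Fintype.sum_sum_type]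
  simp [Fintype.sum_prod_type]

lemma koch_sum_tri {m t : ℕ} {M : Type*} [AddCommMonoid M] (f : KochTri m (t+1) → M) :
    ∑ σ : KochTri m (t+1), f σ
      = ∑ τ : KochTri m t, f (Sum.inl τ)
        + ∑ τ : KochTri m t, ∑ c : Fin 3, ∑ g : Fin m, f (Sum.inr (τ, c, g)) := by
  rw [show (∑ a : KochTri m (t+1), f a)
      = ∑ a : KochTri m t ⊕ (KochTri m t × Fin 3 × Fin m), f a from rfl,
    Fintype.sum_sum_type]
  simp [Fintype.sum_prod_type]

lemma koch_dist_inr_inl {m t : ℕ} (τ : KochTri m t) (c : Fin 3) (g : Fin m) (p : Fin 2)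
    (v : KochVertex m t) :
    (KochGraph m (t+1)).dist (Sum.inr (τ, c, g, p)) (Sum.inl v) =
      (KochGraph m t).dist (KochCorner m t τ c) v + 1 := by
  rw [SimpleGraph.dist_comm, koch_dist_inl_inr, SimpleGraph.dist_comm]

/-- Sum over the two members of a fixed new group of distances from a fixed new vertex. -/
lemma koch_sum_dist_pair {m t : ℕ} (τ τ' : KochTri m t) (c c' : Fin 3) (g g' : Fin m)
    (p : Fin 2) :
    ∑ p' : Fin 2, ((KochGraph m (t+1)).dist (Sum.inr (τ, c, g, p)) (Sum.inr (τ', c', g', p')) : ℝ)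
    = 2 * ((KochGraph m t).dist (KochCorner m t τ c) (KochCorner m t τ' c') : ℝ) + 4
      + (if τ' = τ then if c' = c then if g' = g then (-3 : ℝ) else 0 else 0 else 0) := by
  by_cases h : τ = τ' ∧ c = c' ∧ g = g'
  · obtain ⟨rfl, rfl, rfl⟩ := h
    simp only [Fin.sum_univ_two, koch_dist_inr_inr_same, SimpleGraph.dist_self, if_pos rfl]
    fin_cases p <;> norm_num <;> exact koch_adj_inr_inr.mpr ⟨rfl, rfl, rfl, by decide⟩
  · have h0 : (if τ' = τ then if c' = c then if g' = g then (-3 : ℝ) else 0 else 0 else 0) = 0 := by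
      split_ifs with h1 h2 h3
      · exact absurd ⟨h1.symm, h2.symm, h3.symm⟩ h
      all_goals rfl
    rw [h0, Fin.sum_univ_two, koch_dist_inr_inr τ τ' c c' g g' p 0 h,
      koch_dist_inr_inr τ τ' c c' g g' p 1 h]
    push_cast; ring

noncomputable def kR (m t : ℕ) (a : KochVertex m t) : ℝ :=
  ∑ b, ((KochGraph m t).dist a b : ℝ)

noncomputable def kP (m t : ℕ) (a : KochVertex m t) : ℝ :=
  ∑ τ, ∑ i : Fin 3, ((KochGraph m t).dist a (KochCorner m t τ i) : ℝ)

noncomputable def kD (m t : ℕ) : ℝ := ∑ a, kR m t a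

noncomputable def kF (m t : ℕ) : ℝ := ∑ τ, ∑ i : Fin 3, kR m t (KochCorner m t τ i)

noncomputable def kG (m t : ℕ) : ℝ := ∑ τ, ∑ i : Fin 3, kP m t (KochCorner m t τ i)

lemma koch_card_tri_real (m t : ℕ) :
    ((Fintype.card (KochTri m t) : ℝ)) = (3*(m:ℝ)+1)^t := by
  rw [koch_card_tri]; push_cast; ring

lemma kR_inl {m t : ℕ} (u : KochVertex m t) :
    kR m (t+1) (Sum.inl u) = kR m t u + 2*m * kP m t u + 6*m*(3*(m:ℝ)+1)^t := by
  erw [kR, koch_sum_vertex]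
  have h1 : ∑ v : KochVertex m t, ((KochGraph m (t+1)).dist (Sum.inl u) (Sum.inl v) : ℝ)
      = kR m t u := Finset.sum_congr rfl fun v _ => by rw [koch_dist_inl_inl]
  rw [h1]
  have h2 : ∀ τ (c : Fin 3),
      ∑ g : Fin m, ∑ p : Fin 2,
        ((KochGraph m (t+1)).dist (Sum.inl u) (Sum.inr (τ, c, g, p)) : ℝ)
      = 2*m*((KochGraph m t).dist u (KochCorner m t τ c) : ℝ) + 2*m := by
    intro τ c
    have : ∀ (g : Fin m) (p : Fin 2),
        ((KochGraph m (t+1)).dist (Sum.inl u) (Sum.inr (τ, c, g, p)) : ℝ)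
        = ((KochGraph m t).dist u (KochCorner m t τ c) : ℝ) + 1 := fun g p => by
      rw [koch_dist_inl_inr]; push_cast; ring
    simp only [this, Finset.sum_const, Finset.card_univ, Fintype.card_fin, nsmul_eq_mul]
    push_cast; ring
  simp only [h2]
  have h3 : ∑ τ, ∑ c : Fin 3,
      (2*(m:ℝ)*((KochGraph m t).dist u (KochCorner m t τ c) : ℝ) + 2*m)
      = 2*m * kP m t u + 6*m*(3*(m:ℝ)+1)^t := by
    rw [kP, ← koch_card_tri_real m t]
    simp only [Finset.sum_add_distrib, Finset.sum_const, Finset.card_univ, nsmul_eq_mul,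
      Fintype.card_fin, Finset.mul_sum]
    push_cast
    ring
  rw [h3]
  ring

lemma koch_card_vertex_real (m t : ℕ) :
    ((Fintype.card (KochVertex m t) : ℝ)) = 2*(3*(m:ℝ)+1)^t + 1 := by
  rw [koch_card_vertex]; push_cast; ring

lemma koch_ite_sum3 {m t : ℕ} (τ : KochTri m t) (c : Fin 3) (g : Fin m) :
    ∑ τ' : KochTri m t, ∑ c' : Fin 3, ∑ g' : Fin m,
      (if τ' = τ then if c' = c then if g' = g then (-3 : ℝ) else 0 else 0 else 0) = -3 := by
  have h1 : ∀ (τ' : KochTri m t) (c' : Fin 3), ∑ g' : Fin m,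
      (if τ' = τ then if c' = c then if g' = g then (-3 : ℝ) else 0 else 0 else 0)
      = (if τ' = τ then if c' = c then (-3 : ℝ) else 0 else 0) := by
    intro τ' c'
    by_cases h1 : τ' = τ <;> by_cases h2 : c' = c <;> simp [h1, h2, Finset.sum_ite_eq']
  simp only [h1]
  have h2 : ∀ τ' : KochTri m t, ∑ c' : Fin 3,
      (if τ' = τ then if c' = c then (-3 : ℝ) else 0 else 0)
      = (if τ' = τ then (-3 : ℝ) else 0) := by
    intro τ'
    by_cases h1 : τ' = τ <;> simp [h1, Finset.sum_ite_eq']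
  simp only [h2, Finset.sum_ite_eq', Finset.mem_univ, if_pos]

lemma kR_inr {m t : ℕ} (τ : KochTri m t) (c : Fin 3) (g : Fin m) (p : Fin 2) :
    kR m (t+1) (Sum.inr (τ, c, g, p))
      = kR m t (KochCorner m t τ c) + 2*m * kP m t (KochCorner m t τ c)
        + (12*m+2)*(3*(m:ℝ)+1)^t - 2 := by
  erw [kR, koch_sum_vertex]
  have h1 : ∑ v : KochVertex m t, ((KochGraph m (t+1)).dist (Sum.inr (τ, c, g, p)) (Sum.inl v) : ℝ)
      = kR m t (KochCorner m t τ c) + (2*(3*(m:ℝ)+1)^t + 1) := by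
    have : ∀ v : KochVertex m t,
        ((KochGraph m (t+1)).dist (Sum.inr (τ, c, g, p)) (Sum.inl v) : ℝ)
        = ((KochGraph m t).dist (KochCorner m t τ c) v : ℝ) + 1 := fun v => by
      rw [koch_dist_inr_inl]; push_cast; ring
    simp only [this, Finset.sum_add_distrib, Finset.sum_const, Finset.card_univ, nsmul_eq_mul]
    rw [koch_card_vertex_real, kR]
    ring
  rw [h1]
  have h2 : ∀ (τ' : KochTri m t) (c' : Fin 3), ∑ g' : Fin m, ∑ p' : Fin 2,
      ((KochGraph m (t+1)).dist (Sum.inr (τ, c, g, p)) (Sum.inr (τ', c', g', p')) : ℝ)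
      = ∑ g' : Fin m,
          (2 * ((KochGraph m t).dist (KochCorner m t τ c) (KochCorner m t τ' c') : ℝ) + 4
            + (if τ' = τ then if c' = c then if g' = g then (-3 : ℝ) else 0 else 0 else 0)) :=
    fun τ' c' => Finset.sum_congr rfl fun g' _ => koch_sum_dist_pair τ τ' c c' g g' p
  simp only [h2]
  simp only [Finset.sum_add_distrib, Finset.sum_const, Finset.card_univ, nsmul_eq_mul,
    Fintype.card_fin]
  rw [koch_ite_sum3 τ c g]
  have h3 : ∑ τ' : KochTri m t, ∑ c' : Fin 3, ((m:ℝ) *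
      (2 * ((KochGraph m t).dist (KochCorner m t τ c) (KochCorner m t τ' c') : ℝ)))
      = 2*m * kP m t (KochCorner m t τ c) := by
    rw [kP, Finset.mul_sum]
    refine Finset.sum_congr rfl fun τ' _ => ?_
    rw [Finset.mul_sum]
    exact Finset.sum_congr rfl fun c' _ => by ring
  rw [h3, koch_card_tri_real]
  push_cast
  ring

lemma kP_inl {m t : ℕ} (u : KochVertex m t) :
    kP m (t+1) (Sum.inl u) = (3*(m:ℝ)+1) * kP m t u + 6*m*(3*(m:ℝ)+1)^t := by
  erw [kP, koch_sum_tri]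
  have h1 : ∑ τ : KochTri m t, ∑ i : Fin 3,
      ((KochGraph m (t+1)).dist (Sum.inl u) (KochCorner m (t+1) (Sum.inl τ) i) : ℝ)
      = kP m t u := by
    rw [kP]
    refine Finset.sum_congr rfl fun τ _ => Finset.sum_congr rfl fun i _ => ?_
    rw [koch_corner_inl, koch_dist_inl_inl]
  have h2 : ∀ (τ : KochTri m t) (c : Fin 3) (g : Fin m),
      ∑ i : Fin 3,
        ((KochGraph m (t+1)).dist (Sum.inl u) (KochCorner m (t+1) (Sum.inr (τ, c, g)) i) : ℝ)
      = 3*((KochGraph m t).dist u (KochCorner m t τ c) : ℝ) + 2 := by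
    intro τ c g
    rw [Fin.sum_univ_three,
      show KochCorner m (t+1) (Sum.inr (τ, c, g)) 0 = Sum.inl (KochCorner m t τ c) from rfl,
      show KochCorner m (t+1) (Sum.inr (τ, c, g)) 1 = Sum.inr (τ, c, g, 0) from rfl,
      show KochCorner m (t+1) (Sum.inr (τ, c, g)) 2 = Sum.inr (τ, c, g, 1) from rfl,
      koch_dist_inl_inl, koch_dist_inl_inr, koch_dist_inl_inr]
    push_cast; ring
  rw [h1]
  simp only [h2, Finset.sum_add_distrib, Finset.sum_const, Finset.card_univ, nsmul_eq_mul,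
    Fintype.card_fin]
  rw [kP, ← koch_card_tri_real m t]
  have e1 : ∑ x : KochTri m t, ∑ y : Fin 3,
      (m:ℝ) * (3 * ((KochGraph m t).dist u (KochCorner m t x y) : ℝ))
      = 3 * m * ∑ x : KochTri m t, ∑ y : Fin 3,
          ((KochGraph m t).dist u (KochCorner m t x y) : ℝ) := by
    rw [Finset.mul_sum]
    refine Finset.sum_congr rfl fun x _ => ?_
    rw [Finset.mul_sum]
    exact Finset.sum_congr rfl fun y _ => by ring
  rw [e1]
  push_cast
  ring

lemma kP_inr {m t : ℕ} (τ : KochTri m t) (c : Fin 3) (g : Fin m) (p : Fin 2) :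
    kP m (t+1) (Sum.inr (τ, c, g, p))
      = (3*(m:ℝ)+1) * kP m t (KochCorner m t τ c) + (15*m+3)*(3*(m:ℝ)+1)^t - 3 := by
  erw [kP, koch_sum_tri]
  have h1 : ∑ τ' : KochTri m t, ∑ i : Fin 3,
      ((KochGraph m (t+1)).dist (Sum.inr (τ, c, g, p)) (KochCorner m (t+1) (Sum.inl τ') i) : ℝ)
      = kP m t (KochCorner m t τ c) + 3*(3*(m:ℝ)+1)^t := by
    have : ∀ (τ' : KochTri m t) (i : Fin 3),
        ((KochGraph m (t+1)).dist (Sum.inr (τ, c, g, p)) (KochCorner m (t+1) (Sum.inl τ') i) : ℝ)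
        = ((KochGraph m t).dist (KochCorner m t τ c) (KochCorner m t τ' i) : ℝ) + 1 := by
      intro τ' i
      rw [koch_corner_inl, koch_dist_inr_inl]
      push_cast; ring
    simp only [this, Finset.sum_add_distrib, Finset.sum_const, Finset.card_univ, nsmul_eq_mul,
      Fintype.card_fin]
    rw [kP, ← koch_card_tri_real m t]
    push_cast; ring
  have h2 : ∀ (τ' : KochTri m t) (c' : Fin 3) (g' : Fin m),
      ∑ i : Fin 3,
        ((KochGraph m (t+1)).dist (Sum.inr (τ, c, g, p))
          (KochCorner m (t+1) (Sum.inr (τ', c', g')) i) : ℝ)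
      = 3*((KochGraph m t).dist (KochCorner m t τ c) (KochCorner m t τ' c') : ℝ) + 5
        + (if τ' = τ then if c' = c then if g' = g then (-3 : ℝ) else 0 else 0 else 0) := by
    intro τ' c' g'
    have hpair := koch_sum_dist_pair τ τ' c c' g g' p
    rw [Fin.sum_univ_two] at hpair
    rw [Fin.sum_univ_three,
      show KochCorner m (t+1) (Sum.inr (τ', c', g')) 0 = Sum.inl (KochCorner m t τ' c') from rfl,
      show KochCorner m (t+1) (Sum.inr (τ', c', g')) 1 = Sum.inr (τ', c', g', 0) from rfl,
      show KochCorner m (t+1) (Sum.inr (τ', c', g')) 2 = Sum.inr (τ', c', g', 1) from rfl,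
      koch_dist_inr_inl]
    push_cast
    linarith [hpair]
  rw [h1]
  simp only [h2]
  simp only [Finset.sum_add_distrib, Finset.sum_const, Finset.card_univ, nsmul_eq_mul,
    Fintype.card_fin]
  rw [koch_ite_sum3 τ c g]
  have h3 : ∑ τ' : KochTri m t, ∑ c' : Fin 3, ((m:ℝ) *
      (3 * ((KochGraph m t).dist (KochCorner m t τ c) (KochCorner m t τ' c') : ℝ)))
      = 3*m * kP m t (KochCorner m t τ c) := by
    rw [kP, Finset.mul_sum]
    refine Finset.sum_congr rfl fun τ' _ => ?_
    rw [Finset.mul_sum]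
    exact Finset.sum_congr rfl fun c' _ => by ring
  rw [h3, koch_card_tri_real]
  push_cast
  ring

lemma koch_sum_kP (m t : ℕ) : ∑ u, kP m t u = kF m t := by
  rw [kF]
  simp only [kP, kR]
  rw [Finset.sum_comm]
  refine Finset.sum_congr rfl fun τ _ => ?_
  rw [Finset.sum_comm]
  exact Finset.sum_congr rfl fun i _ => Finset.sum_congr rfl fun u _ => by
    rw [SimpleGraph.dist_comm]

lemma kD_succ (m t : ℕ) :
    kD m (t+1) = kD m t + 4*m*kF m t + 4*(m:ℝ)^2*kG m t
      + (72*(m:ℝ)^2+24*m)*((3*(m:ℝ)+1)^t)^2 - 6*m*(3*(m:ℝ)+1)^t := by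
  have hx : ((Fintype.card (KochTri m t) : ℝ)) = (3*(m:ℝ)+1)^t := koch_card_tri_real m t
  have hv : ((Fintype.card (KochVertex m t) : ℝ)) = 2*(3*(m:ℝ)+1)^t+1 := koch_card_vertex_real m t
  have hkp := koch_sum_kP m t
  simp only [kF] at hkp
  simp only [kD, kF, kG]
  erw [koch_sum_vertex]
  simp only [kR_inl, kR_inr, mul_add, mul_sub, mul_one, Finset.sum_add_distrib,
    Finset.sum_sub_distrib, Finset.sum_const, Finset.card_univ, Fintype.card_fin, nsmul_eq_mul,
    ← Finset.mul_sum]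
  rw [hkp, hx, hv]
  ring

lemma kF_succ (m t : ℕ) :
    kF m (t+1) = (3*(m:ℝ)+1)*kF m t + 2*m*(3*(m:ℝ)+1)*kG m t
      + (90*(m:ℝ)^2+30*m)*((3*(m:ℝ)+1)^t)^2 - 12*m*(3*(m:ℝ)+1)^t := by
  have hx : ((Fintype.card (KochTri m t) : ℝ)) = (3*(m:ℝ)+1)^t := koch_card_tri_real m t
  simp only [kF, kG]
  erw [koch_sum_tri]
  have hold : ∀ (τ : KochTri m t) (i : Fin 3),
      kR m (t+1) (KochCorner m (t+1) (Sum.inl τ) i) = kR m (t+1) (Sum.inl (KochCorner m t τ i)) :=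
    fun τ i => by rw [koch_corner_inl]
  have hnew : ∀ (τ : KochTri m t) (c : Fin 3) (g : Fin m),
      ∑ i : Fin 3, kR m (t+1) (KochCorner m (t+1) (Sum.inr (τ, c, g)) i)
      = 3*(kR m t (KochCorner m t τ c) + 2*m*kP m t (KochCorner m t τ c))
        + 6*m*(3*(m:ℝ)+1)^t + 2*((12*m+2)*(3*(m:ℝ)+1)^t - 2) := by
    intro τ c g
    rw [Fin.sum_univ_three,
      show KochCorner m (t+1) (Sum.inr (τ, c, g)) 0 = Sum.inl (KochCorner m t τ c) from rfl,
      show KochCorner m (t+1) (Sum.inr (τ, c, g)) 1 = Sum.inr (τ, c, g, 0) from rfl,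
      show KochCorner m (t+1) (Sum.inr (τ, c, g)) 2 = Sum.inr (τ, c, g, 1) from rfl,
      kR_inl, kR_inr, kR_inr]
    ring
  simp only [hold, kR_inl, hnew, mul_add, mul_sub, mul_one, Finset.sum_add_distrib,
    Finset.sum_sub_distrib, Finset.sum_const, Finset.card_univ, Fintype.card_fin, nsmul_eq_mul,
    ← Finset.mul_sum]
  rw [hx]
  ring

lemma kG_succ (m t : ℕ) :
    kG m (t+1) = (9*(m:ℝ)^2+6*m+1)*kG m t
      + (108*(m:ℝ)^2+36*m)*((3*(m:ℝ)+1)^t)^2 - 18*m*(3*(m:ℝ)+1)^t := by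
  have hx : ((Fintype.card (KochTri m t) : ℝ)) = (3*(m:ℝ)+1)^t := koch_card_tri_real m t
  simp only [kG]
  erw [koch_sum_tri]
  have hold : ∀ (τ : KochTri m t) (i : Fin 3),
      kP m (t+1) (KochCorner m (t+1) (Sum.inl τ) i) = kP m (t+1) (Sum.inl (KochCorner m t τ i)) :=
    fun τ i => by rw [koch_corner_inl]
  have hnew : ∀ (τ : KochTri m t) (c : Fin 3) (g : Fin m),
      ∑ i : Fin 3, kP m (t+1) (KochCorner m (t+1) (Sum.inr (τ, c, g)) i)
      = 3*(3*(m:ℝ)+1)*kP m t (KochCorner m t τ c)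
        + 6*m*(3*(m:ℝ)+1)^t + 2*((15*m+3)*(3*(m:ℝ)+1)^t - 3) := by
    intro τ c g
    rw [Fin.sum_univ_three,
      show KochCorner m (t+1) (Sum.inr (τ, c, g)) 0 = Sum.inl (KochCorner m t τ c) from rfl,
      show KochCorner m (t+1) (Sum.inr (τ, c, g)) 1 = Sum.inr (τ, c, g, 0) from rfl,
      show KochCorner m (t+1) (Sum.inr (τ, c, g)) 2 = Sum.inr (τ, c, g, 1) from rfl,
      kP_inl, kP_inr, kP_inr]
    ring
  simp only [hold, kP_inl, hnew, mul_add, mul_sub, mul_one, Finset.sum_add_distrib,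
    Finset.sum_sub_distrib, Finset.sum_const, Finset.card_univ, Fintype.card_fin, nsmul_eq_mul,
    ← Finset.mul_sum]
  rw [hx]
  ring

lemma koch_dist_zero {m : ℕ} (u v : KochVertex m 0) :
    (KochGraph m 0).dist u v = if u = v then 0 else 1 := by
  split
  · next h => rw [h, SimpleGraph.dist_self]
  · next h => exact SimpleGraph.dist_eq_one_iff_adj.mpr ⟨h, (), u, v, rfl, rfl⟩

lemma koch_tri_sum_zero {m : ℕ} (f : KochTri m 0 → ℝ) : ∑ τ, f τ = f () := by
  haveI : Unique (KochTri m 0) := inferInstanceAs (Unique Unit)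
  exact Fintype.sum_unique f

lemma koch_vertex_sum_zero {m : ℕ} (f : KochVertex m 0 → ℝ) :
    ∑ v, f v = f (0 : Fin 3) + f (1 : Fin 3) + f (2 : Fin 3) :=
  Fin.sum_univ_three f

lemma kR_zero {m : ℕ} (u : KochVertex m 0) : kR m 0 u = 2 := by
  erw [kR, koch_vertex_sum_zero]
  erw [koch_dist_zero, koch_dist_zero, koch_dist_zero]
  fin_cases u <;> simp (config := { decide := true }) <;>
    norm_num

lemma kP_zero {m : ℕ} (u : KochVertex m 0) : kP m 0 u = 2 := by
  erw [kP, koch_tri_sum_zero (f := fun τ => ∑ i : Fin 3,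
    ((KochGraph m 0).dist u (KochCorner m 0 τ i) : ℝ)), Fin.sum_univ_three]
  have h : ∀ i : Fin 3, KochCorner m 0 () i = i := fun _ => rfl
  rw [h 0, h 1, h 2]
  erw [koch_dist_zero, koch_dist_zero, koch_dist_zero]
  fin_cases u <;> simp (config := { decide := true }) <;>
    norm_num

lemma kD_zero (m : ℕ) : kD m 0 = 6 := by
  erw [kD, koch_vertex_sum_zero (f := kR m 0)]
  simp only [kR_zero]
  norm_num

lemma kF_zero (m : ℕ) : kF m 0 = 6 := by
  erw [kF, koch_tri_sum_zero (f := fun τ => ∑ i : Fin 3, kR m 0 (KochCorner m 0 τ i)),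
    Fin.sum_univ_three]
  simp only [kR_zero]
  norm_num

lemma kG_zero (m : ℕ) : kG m 0 = 6 := by
  erw [kG, koch_tri_sum_zero (f := fun τ => ∑ i : Fin 3, kP m 0 (KochCorner m 0 τ i)),
    Fin.sum_univ_three]
  simp only [kP_zero]
  norm_num

lemma kG_closed (m : ℕ) : ∀ t : ℕ, (3*(m:ℝ)+1) * kG m t
    = 18*m*(2*t+1)*((3*(m:ℝ)+1)^t)^2 + 6*(3*(m:ℝ)+1)^t := by
  intro t
  induction t with
  | zero => rw [kG_zero]; norm_num; ring
  | succ t ih =>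
    rw [kG_succ, pow_succ]
    push_cast
    linear_combination (9*(m:ℝ)^2+6*m+1) * ih

lemma kF_closed (m : ℕ) : ∀ t : ℕ, (3*(m:ℝ)+1) * kF m t
    = (24*m*t + 18*m+2)*((3*(m:ℝ)+1)^t)^2 + 4*(3*(m:ℝ)+1)^t := by
  intro t
  induction t with
  | zero => rw [kF_zero]; norm_num; ring
  | succ t ih =>
    rw [kF_succ, pow_succ]
    push_cast
    linear_combination (3*(m:ℝ)+1) * ih + 2*(m:ℝ)*(3*(m:ℝ)+1) * kG_closed m t

lemma kD_closed (m : ℕ) : ∀ t : ℕ, 3*(3*(m:ℝ)+1) * kD m t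
    = 2*(3*(m:ℝ)+5)*(3*(m:ℝ)+1)^t + 2*(24*m*t+24*m+4)*((3*(m:ℝ)+1)^t)^2 := by
  intro t
  induction t with
  | zero => rw [kD_zero]; norm_num; ring
  | succ t ih =>
    rw [kD_succ, pow_succ]
    push_cast
    linear_combination ih + 12*(m:ℝ) * kF_closed m t + 12*(m:ℝ)^2 * kG_closed m t

/-- For all integers m ≥ 1 and t ≥ 0, the average of the graph distance over all
unordered pairs of distinct vertices of `K_{m,t}` (the sum over ordered pairs halved, divided
by `N(N-1)/2`) equals `[3m+5+(24mt+24m+4)(3m+1)^t] / {3(3m+1)[2(3m+1)^t+1]}`. -/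

theorem koch_average_path_length (m t : ℕ) (hm : 1 ≤ m) :
    ((∑ u : KochVertex m t, ∑ v : KochVertex m t, ((KochGraph m t).dist u v : ℝ)) / 2) /
        ((Fintype.card (KochVertex m t) : ℝ) * ((Fintype.card (KochVertex m t) : ℝ) - 1) / 2)
      = (3 * (m : ℝ) + 5 + (24 * m * t + 24 * m + 4) * (3 * m + 1) ^ t) /
          (3 * (3 * (m : ℝ) + 1) * (2 * (3 * m + 1) ^ t + 1)) := by
  have hS : (∑ u : KochVertex m t, ∑ v : KochVertex m t, ((KochGraph m t).dist u v : ℝ))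
      = kD m t := by
    rw [kD]; exact Finset.sum_congr rfl fun u _ => by rw [kR]
  rw [hS, koch_card_vertex_real]
  have hx : (0:ℝ) < (3*(m:ℝ)+1)^t := by positivity
  have h31 : (0:ℝ) < 3*(m:ℝ)+1 := by positivity
  have hkd := kD_closed m t
  have hkd' : kD m t = (2*(3*(m:ℝ)+5)*(3*(m:ℝ)+1)^t
      + 2*(24*m*t+24*m+4)*((3*(m:ℝ)+1)^t)^2)/(3*(3*(m:ℝ)+1)) := by
    rw [eq_div_iff (by positivity)]
    linarith [hkd]
  rw [hkd', show (2*(3*(m:ℝ)+1)^t+1) - 1 = 2*(3*(m:ℝ)+1)^t from by ring]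
  have hne1 : (3*(m:ℝ)+1)^t ≠ 0 := hx.ne'
  have hne2 : (2*(3*(m:ℝ)+1)^t+1) ≠ 0 := by positivity
  have hne3 : (3*(m:ℝ)+1) ≠ 0 := h31.ne'
  field_simp
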